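/- Let v₀, v₁, v₂, … be i.i.d. positive real-valued random variables with E[1/v₀] < ∞, and let u₁, u₂, … be random variables with values in [0,1]. Fix n ≥ 1, define the backward Metropolis runs A₀, …, A_n from v₀, …, v_n and u₁, …, u_n, and set Ŷ_i := 1/A_{n−i} for 0 ≤ i ≤ n. Then E[|Ŷ_0| + Σ_{i=1}^n |Ŷ_i − Ŷ_{i−1}|] ≤ 2·E[1/v₀]; in particular, the backward coupled estimator satisfies the integrability condition for Russian roulette truncation uniformly in n. -/

import Mathlib

open MeasureTheory

/-- The Metropolis weight update: from current weight `w`, proposed weight `w'`, and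
uniform draw `u`, accept the proposal iff `u ≤ min 1 (w'/w)`. -/
noncomputable def metroF (w w' u : ℝ) : ℝ := if u ≤ min 1 (w' / w) then w' else w

/-- The chain started at index `k`, after `m` steps: `B k = v k`,
`B (k+m+1) = f (B (k+m)) (v (k+m+1)) (u (k+m+1))`. -/
noncomputable def backB (v u : ℕ → ℝ) (k : ℕ) : ℕ → ℝ
  | 0 => v k
  | m + 1 => metroF (backB v u k m) (v (k + m + 1)) (u (k + m + 1))

/-- The backward Metropolis run started at index `k ≤ n`: start at `v k` and apply the
Metropolis updates with proposals `v (k+1), …, v n` and draws `u (k+1), …, u n`; runs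
started at different indices share the same pair `(v j, u j)` at each step `j`. -/
noncomputable def backA (v u : ℕ → ℝ) (n k : ℕ) : ℝ := backB v u k (n - k)

lemma metroF_pos {w w' u : ℝ} (hw : 0 < w) (hw' : 0 < w') : 0 < metroF w w' u := by
  unfold metroF; split <;> assumption

/-- If the current state rejects with u ≤ 1, the proposal was smaller. -/
lemma metroF_ge_prop {w w' u : ℝ} (hw : 0 < w) (hu : u ≤ 1) : w' ≤ metroF w w' u := by
  unfold metroF
  split_ifs with h
  · exact le_refl w'
  · push_neg at h
    have h1 : min 1 (w' / w) < 1 := lt_of_lt_of_le h hu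
    have h2 : w' / w < 1 := by
      rcases min_lt_iff.mp h1 with h' | h'
      · exact absurd h' (lt_irrefl 1)
      · exact h'
    have := (div_lt_one hw).mp h2
    exact le_of_lt this

/-- Monotonicity of the Metropolis update in the current state (shared proposal/draw). -/
lemma metroF_mono {b b' p u : ℝ} (hb' : 0 < b') (hle : b' ≤ b) (hp : 0 < p)
    (hu : u ≤ 1) : metroF b' p u ≤ metroF b p u := by
  have hb : 0 < b := lt_of_lt_of_le hb' hle
  unfold metroF
  split_ifs with h h2 h2
  · exact le_refl p
  · -- b' accepts, b rejects : then p < b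
    push_neg at h2
    have h1 : min 1 (p / b) < 1 := lt_of_lt_of_le h2 hu
    have hpb : p / b < 1 := by
      rcases min_lt_iff.mp h1 with h' | h'
      · exact absurd h' (lt_irrefl 1)
      · exact h'
    exact le_of_lt ((div_lt_one hb).mp hpb)
  · -- b' rejects, b accepts : impossible
    exfalso
    apply h
    refine le_trans h2 ?_
    exact min_le_min (le_refl 1) (div_le_div_of_nonneg_left (le_of_lt hp) hb' hle)
  · exact hle

lemma backB_pos {v u : ℕ → ℝ} (hv : ∀ j, 0 < v j) (k : ℕ) :
    ∀ m, 0 < backB v u k m := by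
  intro m
  induction m with
  | zero => exact hv k
  | succ m ih => exact metroF_pos ih (hv _)

/-- Coupled run monotonicity: the run started one step earlier dominates. -/
lemma backB_succ_le {v u : ℕ → ℝ} (hv : ∀ j, 0 < v j) (hu : ∀ j, u j ≤ 1) (k : ℕ) :
    ∀ m, backB v u (k + 1) m ≤ backB v u k (m + 1) := by
  intro m
  induction m with
  | zero =>
    show v (k + 1) ≤ metroF (backB v u k 0) (v (k + 0 + 1)) (u (k + 0 + 1))
    simpa [backB] using metroF_ge_prop (w' := v (k + 1)) (hv k) (hu (k + 1))
  | succ m ih =>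
    have hidx : k + 1 + m + 1 = k + (m + 1) + 1 := by omega
    show metroF (backB v u (k + 1) m) (v (k + 1 + m + 1)) (u (k + 1 + m + 1)) ≤
      metroF (backB v u k (m + 1)) (v (k + (m + 1) + 1)) (u (k + (m + 1) + 1))
    rw [hidx]
    exact metroF_mono (backB_pos hv _ _) ih (hv _) (hu _)

lemma backA_succ_le {v u : ℕ → ℝ} (hv : ∀ j, 0 < v j) (hu : ∀ j, u j ≤ 1)
    {n k : ℕ} (hk : k < n) : backA v u n (k + 1) ≤ backA v u n k := by
  unfold backA
  have h1 : n - k = (n - (k + 1)) + 1 := by omega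
  rw [h1]
  exact backB_succ_le hv hu k (n - (k + 1))

lemma telescope_Icc (Y : ℕ → ℝ) (n : ℕ) :
    ∑ i ∈ Finset.Icc 1 n, (Y (i - 1) - Y i) = Y 0 - Y n := by
  induction n with
  | zero => simp
  | succ n ih =>
    rw [Finset.sum_Icc_succ_top (by omega : 1 ≤ n + 1), ih]
    simp only [Nat.add_sub_cancel]
    ring

/-- **The backward coupled estimator satisfies the roulette integrability condition,
uniformly in `n`.** With i.i.d. positive weights `v 0, v 1, …` satisfying
`E[1/v 0] < ∞`, arbitrary `[0,1]`-valued `u`'s, and `Ŷ i = 1 / A (n - i)`,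
`E[|Ŷ 0| + ∑_{i=1}^{n} |Ŷ i - Ŷ (i-1)|] ≤ 2 E[1 / v 0]`. -/
theorem bce_integrability_bound
    {Ω : Type*} [MeasurableSpace Ω] (μ : Measure Ω) [IsProbabilityMeasure μ]
    (v u : ℕ → Ω → ℝ)
    (hvmeas : ∀ k, Measurable (v k)) (humeas : ∀ k, Measurable (u k))
    (hvpos : ∀ k ω, 0 < v k ω) (hu : ∀ k ω, u k ω ∈ Set.Icc (0 : ℝ) 1)
    (hindep : ProbabilityTheory.iIndepFun v μ)
    (hident : ∀ k, ProbabilityTheory.IdentDistrib (v k) (v 0) μ μ)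
    (hint : Integrable (fun ω => 1 / v 0 ω) μ)
    (n : ℕ) (hn : 1 ≤ n) :
    ∫ ω, (|1 / backA (fun j => v j ω) (fun j => u j ω) n (n - 0)| +
      ∑ i ∈ Finset.Icc 1 n,
        |1 / backA (fun j => v j ω) (fun j => u j ω) n (n - i)
          - 1 / backA (fun j => v j ω) (fun j => u j ω) n (n - (i - 1))|) ∂μ
      ≤ 2 * ∫ ω, 1 / v 0 ω ∂μ := by
  -- pointwise bound: integrand ω ≤ 2 / v n ω
  have hpt : ∀ ω, (|1 / backA (fun j => v j ω) (fun j => u j ω) n (n - 0)| +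
      ∑ i ∈ Finset.Icc 1 n,
        |1 / backA (fun j => v j ω) (fun j => u j ω) n (n - i)
          - 1 / backA (fun j => v j ω) (fun j => u j ω) n (n - (i - 1))|)
      ≤ 2 * (1 / v n ω) := by
    intro ω
    set V : ℕ → ℝ := fun j => v j ω with hV
    set U : ℕ → ℝ := fun j => u j ω with hU
    have hVpos : ∀ j, 0 < V j := fun j => hvpos j ω
    have hU1 : ∀ j, U j ≤ 1 := fun j => (hu j ω).2
    set a : ℕ → ℝ := fun k => backA V U n k with ha
    have hapos : ∀ k, 0 < a k := fun k => backB_pos hVpos k _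
    set Y : ℕ → ℝ := fun i => 1 / a (n - i) with hY
    have hYpos : ∀ i, 0 < Y i := fun i => one_div_pos.mpr (hapos _)
    have hYmono : ∀ i ∈ Finset.Icc 1 n, Y i ≤ Y (i - 1) := by
      intro i hi
      rw [Finset.mem_Icc] at hi
      have h1 : n - (i - 1) = (n - i) + 1 := by omega
      have h2 : a (n - (i - 1)) ≤ a (n - i) := by
        rw [h1]
        exact backA_succ_le hVpos hU1 (by omega)
      simp only [hY]
      exact one_div_le_one_div_of_le (hapos _) h2
    have han : a n = V n := by
      simp only [ha, backA, Nat.sub_self]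
      rfl
    have hY0 : Y 0 = 1 / V n := by simp [hY, han]
    have hsum : ∑ i ∈ Finset.Icc 1 n, |Y i - Y (i - 1)| = Y 0 - Y n := by
      have : ∑ i ∈ Finset.Icc 1 n, |Y i - Y (i - 1)|
          = ∑ i ∈ Finset.Icc 1 n, (Y (i - 1) - Y i) := by
        refine Finset.sum_congr rfl fun i hi => ?_
        rw [abs_sub_comm, abs_of_nonneg (sub_nonneg.mpr (hYmono i hi))]
      rw [this, telescope_Icc Y n]
    have hmain : |Y 0| + ∑ i ∈ Finset.Icc 1 n, |Y i - Y (i - 1)| ≤ 2 * (1 / V n) := by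
      rw [hsum, abs_of_pos (hYpos 0), hY0]
      have := (hYpos n).le
      linarith [hY0 ▸ (le_refl (Y 0))]
    -- identify integrand with Y-expression
    have hid0 : (1 : ℝ) / backA (fun j => v j ω) (fun j => u j ω) n (n - 0) = Y 0 := rfl
    calc |1 / backA (fun j => v j ω) (fun j => u j ω) n (n - 0)| +
        ∑ i ∈ Finset.Icc 1 n,
          |1 / backA (fun j => v j ω) (fun j => u j ω) n (n - i)
            - 1 / backA (fun j => v j ω) (fun j => u j ω) n (n - (i - 1))|
        = |Y 0| + ∑ i ∈ Finset.Icc 1 n, |Y i - Y (i - 1)| := rfl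
      _ ≤ 2 * (1 / V n) := hmain
  -- move to integrals
  have hg : Measurable fun x : ℝ => 1 / x := by
    simpa [one_div] using (measurable_inv : Measurable fun x : ℝ => x⁻¹)
  have hid : ProbabilityTheory.IdentDistrib (fun ω => 1 / v n ω) (fun ω => 1 / v 0 ω) μ μ :=
    (hident n).comp hg
  have hint_n : Integrable (fun ω => 1 / v n ω) μ := hid.integrable_iff.mpr hint
  have hnonneg : 0 ≤ᵐ[μ] fun ω =>
      (|1 / backA (fun j => v j ω) (fun j => u j ω) n (n - 0)| +
      ∑ i ∈ Finset.Icc 1 n,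
        |1 / backA (fun j => v j ω) (fun j => u j ω) n (n - i)
          - 1 / backA (fun j => v j ω) (fun j => u j ω) n (n - (i - 1))|) := by
    refine Filter.Eventually.of_forall fun ω => ?_
    have h1 : (0:ℝ) ≤ |1 / backA (fun j => v j ω) (fun j => u j ω) n (n - 0)| := abs_nonneg _
    have h2 : (0:ℝ) ≤ ∑ i ∈ Finset.Icc 1 n,
        |1 / backA (fun j => v j ω) (fun j => u j ω) n (n - i)
          - 1 / backA (fun j => v j ω) (fun j => u j ω) n (n - (i - 1))| :=
      Finset.sum_nonneg fun i _ => abs_nonneg _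
    exact add_nonneg h1 h2
  calc ∫ ω, (|1 / backA (fun j => v j ω) (fun j => u j ω) n (n - 0)| +
      ∑ i ∈ Finset.Icc 1 n,
        |1 / backA (fun j => v j ω) (fun j => u j ω) n (n - i)
          - 1 / backA (fun j => v j ω) (fun j => u j ω) n (n - (i - 1))|) ∂μ
      ≤ ∫ ω, 2 * (1 / v n ω) ∂μ :=
        integral_mono_of_nonneg hnonneg (hint_n.const_mul 2)
          (Filter.Eventually.of_forall hpt)
    _ = 2 * ∫ ω, 1 / v n ω ∂μ := by rw [integral_const_mul]
    _ = 2 * ∫ ω, 1 / v 0 ω ∂μ := by rw [hid.integral_eq]
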